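/- arXiv:1210.1919 — 2 statements merged into one kernel-verified Lean document; each statement's English description precedes it below -/
import Mathlib

section
/- (Abel's integral equation.) Let g ∈ C¹[0,1] with g(0) = 0. Then the equation ∫₀ˣ φ(t)·(x−t)^{−1/2} dt = g(x) for x ∈ [0,1] has the unique continuous solution φ(x) = (1/π)·d/dx ∫₀ˣ g(t)·(x−t)^{−1/2} dt = (1/π) ∫₀ˣ g′(t)·(x−t)^{−1/2} dt. -/
open MeasureTheory Real intervalIntegral Set

set_option maxHeartbeats 1000000

lemma kzero {y : ℝ} (hy : y ≤ 0) : y ^ (-(1/2 : ℝ)) = 0 := by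
  rcases lt_or_eq_of_le hy with h | h
  · rw [Real.rpow_def_of_neg h, show (-(1/2 : ℝ)) * π = -(π/2) by ring,
      Real.cos_neg, Real.cos_pi_div_two, mul_zero]
  · rw [h, Real.zero_rpow (by norm_num : (-(1/2:ℝ)) ≠ 0)]

lemma keq (y : ℝ) : y ^ (-(1/2 : ℝ)) = (Real.sqrt y)⁻¹ := by
  rcases le_or_gt y 0 with h | h
  · rw [kzero h, Real.sqrt_eq_zero'.mpr h, inv_zero]
  · rw [Real.rpow_neg h.le, Real.sqrt_eq_rpow]

lemma knonneg (y : ℝ) : 0 ≤ y ^ (-(1/2 : ℝ)) := by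
  rcases le_or_gt y 0 with h | h
  · rw [kzero h]
  · exact (Real.rpow_pos_of_pos h _).le

lemma kmeas : Measurable fun y : ℝ => y ^ (-(1/2 : ℝ)) := by
  simp only [keq]
  exact Real.continuous_sqrt.measurable.inv

lemma kInt (c a b : ℝ) :
    IntervalIntegrable (fun t => (c - t) ^ (-(1/2 : ℝ))) volume a b := by
  have h := (intervalIntegral.intervalIntegrable_rpow' (r := -(1/2 : ℝ))
      (a := c - a) (b := c - b) (by norm_num)).comp_sub_left c
  simpa using h

lemma kInt' (c a b : ℝ) :
    IntervalIntegrable (fun t => (t - c) ^ (-(1/2 : ℝ))) volume a b := by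
  have h := (intervalIntegral.intervalIntegrable_rpow' (r := -(1/2 : ℝ))
      (a := a - c) (b := b - c) (by norm_num)).comp_sub_right c
  simpa using h

lemma kIntegral {t : ℝ} (ht : 0 ≤ t) :
    ∫ u in (0:ℝ)..t, (t - u) ^ (-(1/2 : ℝ)) = 2 * t ^ ((1/2 : ℝ)) := by
  have h1 : (∫ u in (0:ℝ)..t, (t - u) ^ (-(1/2 : ℝ)))
      = ∫ v in (0:ℝ)..t, v ^ (-(1/2 : ℝ)) := by
    have := intervalIntegral.integral_comp_sub_left
      (a := (0:ℝ)) (b := t) (fun v => v ^ (-(1/2 : ℝ))) t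
    simpa using this
  rw [h1, integral_rpow (Or.inl (by norm_num))]
  rw [Real.zero_rpow (by norm_num)]
  norm_num
  ring

lemma beta_integrable {t x : ℝ} (h : t < x) :
    IntervalIntegrable (fun s => (x - s) ^ (-(1/2:ℝ)) * (s - t) ^ (-(1/2:ℝ))) volume t x := by
  set m := (t + x) / 2 with hm
  have htm' : t < m := by rw [hm]; linarith
  have hmx' : m < x := by rw [hm]; linarith
  have htm : t ≤ m := htm'.le
  have hmx : m ≤ x := hmx'.le
  have hmeasf : ∀ a b : ℝ, AEStronglyMeasurable
      (fun s => (x - s) ^ (-(1/2:ℝ)) * (s - t) ^ (-(1/2:ℝ)))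
      (volume.restrict (Set.uIoc a b)) := by
    intro a b
    exact ((kmeas.comp (measurable_const.sub measurable_id)).mul
      (kmeas.comp (measurable_id.sub measurable_const))).aestronglyMeasurable
  have h1 : IntervalIntegrable (fun s => (x - s) ^ (-(1/2:ℝ)) * (s - t) ^ (-(1/2:ℝ)))
      volume t m := by
    apply IntervalIntegrable.mono_fun (((kInt' t t m).const_mul ((x - m) ^ (-(1/2:ℝ)))))
      (hmeasf t m)
    rw [Filter.EventuallyLE, ae_restrict_iff' measurableSet_uIoc]
    filter_upwards with s hs
    rw [Set.uIoc_of_le htm] at hs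
    have h2 : (x - s) ^ (-(1/2:ℝ)) ≤ (x - m) ^ (-(1/2:ℝ)) :=
      Real.rpow_le_rpow_of_nonpos (by linarith) (by linarith [hs.2]) (by norm_num)
    rw [Real.norm_eq_abs, Real.norm_eq_abs, abs_of_nonneg (mul_nonneg (knonneg _) (knonneg _)),
      abs_of_nonneg (mul_nonneg (knonneg _) (knonneg _))]
    exact mul_le_mul_of_nonneg_right h2 (knonneg _)
  have h2 : IntervalIntegrable (fun s => (x - s) ^ (-(1/2:ℝ)) * (s - t) ^ (-(1/2:ℝ)))
      volume m x := by
    apply IntervalIntegrable.mono_fun (((kInt x m x).mul_const ((m - t) ^ (-(1/2:ℝ)))))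
      (hmeasf m x)
    rw [Filter.EventuallyLE, ae_restrict_iff' measurableSet_uIoc]
    filter_upwards with s hs
    rw [Set.uIoc_of_le hmx] at hs
    have h3 : (s - t) ^ (-(1/2:ℝ)) ≤ (m - t) ^ (-(1/2:ℝ)) :=
      Real.rpow_le_rpow_of_nonpos (by linarith) (by linarith [hs.1]) (by norm_num)
    rw [Real.norm_eq_abs, Real.norm_eq_abs, abs_of_nonneg (mul_nonneg (knonneg _) (knonneg _)),
      abs_of_nonneg (mul_nonneg (knonneg _) (knonneg _))]
    exact mul_le_mul_of_nonneg_left h3 (knonneg _)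
  exact h1.trans h2

lemma beta_eq_pi {t x : ℝ} (h : t < x) :
    ∫ s in t..x, (x - s) ^ (-(1/2:ℝ)) * (s - t) ^ (-(1/2:ℝ)) = π := by
  have hxt : (0:ℝ) < x - t := by linarith
  have key := intervalIntegral.integral_eq_sub_of_hasDeriv_right_of_le h.le
    (f := fun s => Real.arcsin ((2*s - x - t)/(x - t)))
    (f' := fun s => (x - s) ^ (-(1/2:ℝ)) * (s - t) ^ (-(1/2:ℝ)))
    ((Real.continuous_arcsin.comp (by continuity)).continuousOn)
    (fun s hs => by
      set y := (2*s - x - t)/(x - t) with hy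
      have hy1 : y < 1 := by rw [hy, div_lt_one hxt]; linarith [hs.2]
      have hy2 : -1 < y := by rw [hy, lt_div_iff₀ hxt]; nlinarith [hs.1]
      have hin : HasDerivAt (fun s : ℝ => (2*s - x - t)/(x - t)) (2/(x - t)) s := by
        have h0 : HasDerivAt (fun s : ℝ => 2*s - x - t) 2 s := by
          simpa using (((hasDerivAt_id s).const_mul 2).sub_const x).sub_const t
        simpa using h0.div_const (x - t)
      have harc := (Real.hasDerivAt_arcsin hy2.ne' hy1.ne).comp s hin
      have heq : 1 / Real.sqrt (1 - y^2) * (2/(x - t))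
          = (x - s) ^ (-(1/2:ℝ)) * (s - t) ^ (-(1/2:ℝ)) := by
        have hxs : (0:ℝ) < x - s := by linarith [hs.2]
        have hst : (0:ℝ) < s - t := by linarith [hs.1]
        set A := Real.sqrt (x - s) with hA
        set B := Real.sqrt (s - t) with hB
        have hA2 : A^2 = x - s := Real.sq_sqrt hxs.le
        have hB2 : B^2 = s - t := Real.sq_sqrt hst.le
        have hApos : 0 < A := Real.sqrt_pos.mpr hxs
        have hBpos : 0 < B := Real.sqrt_pos.mpr hst
        have h1 : 1 - y^2 = (2*A*B/(x - t))^2 := by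
          have hr : (2*A*B/(x - t))^2 = 4*(x - s)*(s - t)/(x - t)^2 := by
            rw [div_pow, mul_pow, mul_pow, hA2, hB2]; ring
          rw [hr, hy]
          field_simp
          ring
        have h2 : Real.sqrt (1 - y^2) = 2*A*B/(x - t) := by
          rw [h1, Real.sqrt_sq (by positivity)]
        rw [keq, keq, ← hA, ← hB, h2]
        field_simp
      have hfin : HasDerivAt (fun s => Real.arcsin ((2*s - x - t)/(x - t)))
          ((x - s) ^ (-(1/2:ℝ)) * (s - t) ^ (-(1/2:ℝ))) s := by
        rw [← heq]; exact harc
      exact hfin.hasDerivWithinAt)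
    (beta_integrable h)
  rw [key]
  beta_reduce
  have e1 : (2*x - x - t)/(x - t) = 1 := by field_simp; ring
  have e2 : (2*t - x - t)/(x - t) = -1 := by
    rw [div_eq_iff hxt.ne']; ring
  rw [e1, e2, Real.arcsin_one, Real.arcsin_neg_one]
  ring

lemma zero_piece {f : ℝ → ℝ} {a b : ℝ} (hf : ∀ u ∈ Set.uIcc a b, f u = 0) :
    IntervalIntegrable f volume a b ∧ (∫ u in a..b, f u) = 0 := by
  refine ⟨(_root_.intervalIntegrable_const (c := (0:ℝ))).congr ?_, ?_⟩
  · intro u hu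
    exact (hf u (uIoc_subset_uIcc hu)).symm
  · rw [intervalIntegral.integral_congr (g := fun _ => (0:ℝ)) hf]
    simp

lemma hK_int (h : ℝ → ℝ) (hc : Continuous h) (t a b : ℝ) :
    IntervalIntegrable (fun u => h u * (t - u) ^ (-(1/2:ℝ))) volume a b :=
  (kInt t a b).continuousOn_mul hc.continuousOn

lemma inner_extend (h : ℝ → ℝ) (hc : Continuous h) {t x : ℝ} (h0t : 0 ≤ t) (htx : t ≤ x) :
    ∫ u in Set.Ioc (0:ℝ) x, h u * (t - u) ^ (-(1/2:ℝ))
      = ∫ u in (0:ℝ)..t, h u * (t - u) ^ (-(1/2:ℝ)) := by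
  have hzero : ∀ u ∈ Set.uIcc t x, h u * (t - u) ^ (-(1/2:ℝ)) = 0 := by
    intro u hu
    rw [Set.uIcc_of_le htx] at hu
    rw [kzero (by linarith [hu.1]), mul_zero]
  have hsplit := intervalIntegral.integral_add_adjacent_intervals
    (hK_int h hc t 0 t) (hK_int h hc t t x)
  rw [← intervalIntegral.integral_of_le (le_trans h0t htx), ← hsplit,
    (zero_piece hzero).2, add_zero]

lemma fubini_key {h : ℝ → ℝ} (hc : Continuous h) {M : ℝ} (hM : ∀ u, |h u| ≤ M)
    {x : ℝ} (hx : 0 ≤ x) :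
    ∫ t in (0:ℝ)..x, (∫ u in (0:ℝ)..t, h u * (t - u) ^ (-(1/2:ℝ))) * (x - t) ^ (-(1/2:ℝ))
      = π * ∫ u in (0:ℝ)..x, h u := by
  have hM0 : 0 ≤ M := le_trans (abs_nonneg _) (hM 0)
  have hF : ∀ t u : ℝ, h u * (t - u) ^ (-(1/2:ℝ)) * (x - t) ^ (-(1/2:ℝ))
      = h u * (t - u) ^ (-(1/2:ℝ)) * (x - t) ^ (-(1/2:ℝ)) := fun _ _ => rfl
  have hFmeas : Measurable ((fun p : ℝ × ℝ => h p.2 * (p.1 - p.2) ^ (-(1/2:ℝ)) * (x - p.1) ^ (-(1/2:ℝ)))) := by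
    exact ((hc.measurable.comp measurable_snd).mul
      (kmeas.comp (measurable_fst.sub measurable_snd))).mul
      (kmeas.comp (measurable_const.sub measurable_fst))
  have hslice : ∀ t : ℝ, IntegrableOn (fun u => h u * (t - u) ^ (-(1/2:ℝ)) * (x - t) ^ (-(1/2:ℝ))) (Set.Ioc (0:ℝ) x) volume := by
    intro t
    exact (intervalIntegrable_iff_integrableOn_Ioc_of_le hx).mp
      ((hK_int h hc t 0 x).mul_const _)
  have hFint : Integrable ((fun p : ℝ × ℝ => h p.2 * (p.1 - p.2) ^ (-(1/2:ℝ)) * (x - p.1) ^ (-(1/2:ℝ))))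
      ((volume.restrict (Set.Ioc (0:ℝ) x)).prod (volume.restrict (Set.Ioc (0:ℝ) x))) := by
    rw [MeasureTheory.integrable_prod_iff hFmeas.aestronglyMeasurable]
    refine ⟨Filter.Eventually.of_forall hslice, ?_⟩
    have hbint : IntegrableOn (fun t => (M * (2 * x ^ ((1/2:ℝ)))) * (x - t) ^ (-(1/2:ℝ)))
        (Set.Ioc (0:ℝ) x) volume :=
      (intervalIntegrable_iff_integrableOn_Ioc_of_le hx).mp ((kInt x 0 x).const_mul _)
    refine Integrable.mono' hbint
      ((MeasureTheory.StronglyMeasurable.integral_prod_right'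
        (ν := volume.restrict (Set.Ioc (0:ℝ) x))
        hFmeas.norm.stronglyMeasurable).aestronglyMeasurable) ?_
    rw [ae_restrict_iff' measurableSet_Ioc]
    filter_upwards with t ht
    have h0t : 0 ≤ t := ht.1.le
    have htx : t ≤ x := ht.2
    have step1 : (∫ u in Set.Ioc (0:ℝ) x, ‖h u * (t - u) ^ (-(1/2:ℝ)) * (x - t) ^ (-(1/2:ℝ))‖)
        ≤ ∫ u in Set.Ioc (0:ℝ) x, (M * (x - t) ^ (-(1/2:ℝ))) * (t - u) ^ (-(1/2:ℝ)) := by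
      refine setIntegral_mono_on (hslice t).norm ?_ measurableSet_Ioc ?_
      · exact (intervalIntegrable_iff_integrableOn_Ioc_of_le hx).mp ((kInt t 0 x).const_mul _)
      · intro u hu
        simp only [Real.norm_eq_abs, abs_mul,
          abs_of_nonneg (knonneg (t - u)), abs_of_nonneg (knonneg (x - t))]
        calc |h u| * (t - u) ^ (-(1/2:ℝ)) * (x - t) ^ (-(1/2:ℝ))
            ≤ M * (t - u) ^ (-(1/2:ℝ)) * (x - t) ^ (-(1/2:ℝ)) := by
              apply mul_le_mul_of_nonneg_right _ (knonneg _)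
              exact mul_le_mul_of_nonneg_right (hM u) (knonneg _)
          _ = M * (x - t) ^ (-(1/2:ℝ)) * (t - u) ^ (-(1/2:ℝ)) := by ring
    have step2 : ∫ u in Set.Ioc (0:ℝ) x, (M * (x - t) ^ (-(1/2:ℝ))) * (t - u) ^ (-(1/2:ℝ))
        = (M * (x - t) ^ (-(1/2:ℝ))) * (2 * t ^ ((1/2:ℝ))) := by
      rw [MeasureTheory.integral_const_mul]
      congr 1
      have := inner_extend (fun _ => (1:ℝ)) continuous_const h0t htx
      simpa using (this.trans (by simpa using kIntegral h0t))
    have step3 : (M * (x - t) ^ (-(1/2:ℝ))) * (2 * t ^ ((1/2:ℝ)))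
        ≤ (M * (2 * x ^ ((1/2:ℝ)))) * (x - t) ^ (-(1/2:ℝ)) := by
      have ht2 : t ^ ((1/2:ℝ)) ≤ x ^ ((1/2:ℝ)) :=
        Real.rpow_le_rpow h0t htx (by norm_num)
      calc (M * (x - t) ^ (-(1/2:ℝ))) * (2 * t ^ ((1/2:ℝ)))
          ≤ (M * (x - t) ^ (-(1/2:ℝ))) * (2 * x ^ ((1/2:ℝ))) := by
            apply mul_le_mul_of_nonneg_left (by linarith)
              (mul_nonneg hM0 (knonneg _))
        _ = (M * (2 * x ^ ((1/2:ℝ)))) * (x - t) ^ (-(1/2:ℝ)) := by ring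
    rw [Real.norm_eq_abs, abs_of_nonneg (integral_nonneg fun u => norm_nonneg _)]
    exact le_trans step1 (step2 ▸ step3)
  have lhs_eq : (∫ t in (0:ℝ)..x,
      (∫ u in (0:ℝ)..t, h u * (t - u) ^ (-(1/2:ℝ))) * (x - t) ^ (-(1/2:ℝ)))
      = ∫ t in Set.Ioc (0:ℝ) x, (∫ u in Set.Ioc (0:ℝ) x, (h u * (t - u) ^ (-(1/2:ℝ)) * (x - t) ^ (-(1/2:ℝ)))) := by
    rw [intervalIntegral.integral_of_le hx]
    refine setIntegral_congr_fun measurableSet_Ioc ?_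
    intro t ht
    beta_reduce
    rw [← inner_extend h hc ht.1.le ht.2, ← MeasureTheory.integral_mul_const]
  rw [lhs_eq, MeasureTheory.integral_integral_swap hFint]
  have hae : ∀ᵐ u : ℝ, u ∈ Set.Ioc (0:ℝ) x →
      (∫ t in Set.Ioc (0:ℝ) x, (h u * (t - u) ^ (-(1/2:ℝ)) * (x - t) ^ (-(1/2:ℝ)))) = h u * π := by
    have hne : ∀ᵐ u : ℝ, u ≠ x := by
      refine ae_iff.mpr ?_
      have : {u : ℝ | ¬ u ≠ x} = {x} := by ext u; simp
      rw [this]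
      exact measure_singleton x
    filter_upwards [hne] with u hu hmem
    have hux : u < x := lt_of_le_of_ne hmem.2 hu
    have h0u : 0 < u := hmem.1
    have e1 : (∫ t in Set.Ioc (0:ℝ) x, (h u * (t - u) ^ (-(1/2:ℝ)) * (x - t) ^ (-(1/2:ℝ))))
        = ∫ t in Set.Ioc (0:ℝ) x, h u * ((x - t) ^ (-(1/2:ℝ)) * (t - u) ^ (-(1/2:ℝ))) := by
      refine setIntegral_congr_fun measurableSet_Ioc fun t _ => ?_
      ring
    rw [e1, MeasureTheory.integral_const_mul]
    congr 1
    have hzero : ∀ t ∈ Set.uIcc (0:ℝ) u,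
        (x - t) ^ (-(1/2:ℝ)) * (t - u) ^ (-(1/2:ℝ)) = 0 := by
      intro t ht
      rw [Set.uIcc_of_le h0u.le] at ht
      rw [kzero (show t - u ≤ 0 by linarith [ht.2]), mul_zero]
    have hsplit := intervalIntegral.integral_add_adjacent_intervals
      (zero_piece hzero).1 (beta_integrable hux)
    rw [← intervalIntegral.integral_of_le hx, ← hsplit, (zero_piece hzero).2, zero_add,
      beta_eq_pi hux]
  rw [setIntegral_congr_ae measurableSet_Ioc hae]
  rw [MeasureTheory.integral_mul_const, intervalIntegral.integral_of_le hx, mul_comm]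

lemma conv_cont {h : ℝ → ℝ} (hc : Continuous h) {M : ℝ} (hM : ∀ u, |h u| ≤ M) :
    ContinuousOn (fun x => ∫ t in (0:ℝ)..x, h t * (x - t) ^ (-(1/2:ℝ))) (Set.Icc 0 1) := by
  have hM0 : 0 ≤ M := le_trans (abs_nonneg _) (hM 0)
  set G : ℝ → ℝ → ℝ := fun x u => h (x - u) * u ^ (-(1/2:ℝ)) with hG
  have repr : ∀ x ∈ Set.Icc (0:ℝ) 1, (∫ t in (0:ℝ)..x, h t * (x - t) ^ (-(1/2:ℝ)))
      = ∫ u in Set.Ioc (0:ℝ) 1, Set.indicator (Set.Ioc (0:ℝ) x) (G x) u := by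
    intro x hx
    have stepA : (∫ t in (0:ℝ)..x, h t * (x - t) ^ (-(1/2:ℝ)))
        = ∫ u in (0:ℝ)..x, G x u := by
      have := intervalIntegral.integral_comp_sub_left
        (a := (0:ℝ)) (b := x) (fun t => h t * (x - t) ^ (-(1/2:ℝ))) x
      rw [sub_self, sub_zero] at this
      rw [← this]
      refine intervalIntegral.integral_congr fun u hu => ?_
      rw [hG]
      simp
    have stepB : (∫ u in (0:ℝ)..x, G x u)
        = ∫ u in Set.Ioc (0:ℝ) 1, Set.indicator (Set.Ioc (0:ℝ) x) (G x) u := by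
      rw [intervalIntegral.integral_of_le hx.1,
        MeasureTheory.integral_indicator measurableSet_Ioc,
        Measure.restrict_restrict measurableSet_Ioc, Set.Ioc_inter_Ioc]
      simp [min_eq_left hx.2, max_self]
    rw [stepA, stepB]
  intro x₀ hx₀
  rw [ContinuousWithinAt]
  have main : Filter.Tendsto
      (fun x => ∫ u in Set.Ioc (0:ℝ) 1, Set.indicator (Set.Ioc (0:ℝ) x) (G x) u)
      (nhdsWithin x₀ (Set.Icc 0 1))
      (nhds (∫ u in Set.Ioc (0:ℝ) 1, Set.indicator (Set.Ioc (0:ℝ) x₀) (G x₀) u)) := by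
    apply MeasureTheory.tendsto_integral_filter_of_dominated_convergence
      (bound := fun u => M * u ^ (-(1/2:ℝ)))
    · refine Filter.Eventually.of_forall fun x => ?_
      refine (Measurable.indicator ?_ measurableSet_Ioc).aestronglyMeasurable
      exact ((hc.comp (continuous_const.sub continuous_id)).measurable).mul kmeas
    · refine Filter.Eventually.of_forall fun x => ?_
      refine Filter.Eventually.of_forall fun u => ?_
      rw [Real.norm_eq_abs]
      by_cases hu : u ∈ Set.Ioc (0:ℝ) x
      · rw [Set.indicator_of_mem hu, hG]
        rw [abs_mul, abs_of_nonneg (knonneg u)]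
        exact mul_le_mul_of_nonneg_right (hM _) (knonneg _)
      · rw [Set.indicator_of_notMem hu, abs_zero]
        exact mul_nonneg hM0 (knonneg _)
    · refine (intervalIntegrable_iff_integrableOn_Ioc_of_le zero_le_one).mp ?_
      have : IntervalIntegrable (fun u : ℝ => u ^ (-(1/2:ℝ))) volume 0 1 :=
        intervalIntegral.intervalIntegrable_rpow' (by norm_num)
      exact this.const_mul M
    · have hne : ∀ᵐ u : ℝ, u ≠ x₀ := by
        refine ae_iff.mpr ?_
        have : {u : ℝ | ¬ u ≠ x₀} = {x₀} := by ext u; simp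
        rw [this]; exact measure_singleton x₀
      refine Filter.Eventually.filter_mono (ae_mono Measure.restrict_le_self) ?_
      filter_upwards [hne] with u hu
      rcases le_or_gt u 0 with h0 | h0
      · have hz : ∀ x : ℝ, Set.indicator (Set.Ioc (0:ℝ) x) (G x) u = 0 := by
          intro x
          exact Set.indicator_of_notMem (fun hmem => absurd hmem.1 (not_lt.mpr h0)) _
        simp only [hz]
        exact tendsto_const_nhds
      rcases lt_or_gt_of_ne hu with hlt | hgt
      · -- u < x₀ : eventually u < x
        have hev : ∀ᶠ x in nhdsWithin x₀ (Set.Icc 0 1),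
            Set.indicator (Set.Ioc (0:ℝ) x) (G x) u = G x u := by
          have : {y : ℝ | u < y} ∈ nhds x₀ := (isOpen_Ioi).mem_nhds hlt
          refine Filter.eventually_iff_exists_mem.mpr ⟨{y | u < y}, nhdsWithin_le_nhds this, ?_⟩
          intro y hy
          exact Set.indicator_of_mem (show u ∈ Set.Ioc (0:ℝ) y from ⟨h0, le_of_lt hy⟩) _
        have hcontG : Filter.Tendsto (fun x => G x u) (nhdsWithin x₀ (Set.Icc 0 1))
            (nhds (G x₀ u)) := by
          have : Continuous (fun x => G x u) := by
            rw [hG]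
            exact (hc.comp (continuous_id.sub continuous_const)).mul continuous_const
          exact this.continuousAt.continuousWithinAt
        have hmem : u ∈ Set.Ioc (0:ℝ) x₀ := ⟨h0, hlt.le⟩
        rw [Set.indicator_of_mem hmem]
        exact hcontG.congr' (hev.mono fun y hy => hy.symm)
      · -- x₀ < u : eventually x < u, indicator is 0
        have hev : ∀ᶠ x in nhdsWithin x₀ (Set.Icc 0 1),
            Set.indicator (Set.Ioc (0:ℝ) x) (G x) u = 0 := by
          have : {y : ℝ | y < u} ∈ nhds x₀ := (isOpen_Iio).mem_nhds hgt
          refine Filter.eventually_iff_exists_mem.mpr ⟨{y | y < u}, nhdsWithin_le_nhds this, ?_⟩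
          intro y hy
          exact Set.indicator_of_notMem (fun hmem => absurd hmem.2 (not_le.mpr hy)) _
        have hnmem : u ∉ Set.Ioc (0:ℝ) x₀ := fun hmem => absurd hmem.2 (not_le.mpr hgt)
        rw [Set.indicator_of_notMem hnmem]
        exact tendsto_const_nhds.congr' (hev.mono fun y hy => hy.symm)
  beta_reduce
  rw [repr x₀ hx₀]
  refine Filter.Tendsto.congr' ?_ main
  filter_upwards [self_mem_nhdsWithin] with y hy
  exact (repr y hy).symm

lemma ext_of (f : ℝ → ℝ) (hf : ContinuousOn f (Set.Icc 0 1)) :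
    ∃ F : ℝ → ℝ, Continuous F ∧ (∀ x ∈ Set.Icc (0:ℝ) 1, F x = f x) ∧ ∃ M, ∀ u, |F u| ≤ M := by
  refine ⟨fun u => f (max 0 (min 1 u)), ?_, ?_, ?_⟩
  · exact hf.comp_continuous (continuous_const.max (continuous_const.min continuous_id))
      (fun u => ⟨le_max_left _ _, max_le zero_le_one (min_le_left _ _)⟩)
  · intro x hx
    show f (max 0 (min 1 x)) = f x
    rw [min_eq_right hx.2, max_eq_right hx.1]
  · obtain ⟨M, hM⟩ := isCompact_Icc.exists_bound_of_continuousOn hf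
    exact ⟨M, fun u => by
      simpa using hM _ ⟨le_max_left _ _, max_le zero_le_one (min_le_left _ _)⟩⟩

lemma ftc {g g' : ℝ → ℝ}
    (hg : ∀ x ∈ Set.Icc (0:ℝ) 1, HasDerivWithinAt g (g' x) (Set.Icc 0 1) x)
    (hg' : ContinuousOn g' (Set.Icc 0 1)) (hg0 : g 0 = 0)
    {x : ℝ} (hx : x ∈ Set.Icc (0:ℝ) 1) :
    ∫ t in (0:ℝ)..x, g' t = g x := by
  have key := intervalIntegral.integral_eq_sub_of_hasDeriv_right_of_le hx.1
    (f := g) (f' := g')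
    (fun y hy => ((hg y ⟨hy.1, le_trans hy.2 hx.2⟩).continuousWithinAt).mono
      (Set.Icc_subset_Icc le_rfl hx.2))
    (fun y hy => ((hg y ⟨hy.1.le, le_trans hy.2.le hx.2⟩).hasDerivAt
      (Icc_mem_nhds hy.1 (lt_of_lt_of_le hy.2 hx.2))).hasDerivWithinAt)
    (by
      refine ContinuousOn.intervalIntegrable ?_
      rw [Set.uIcc_of_le hx.1]
      exact hg'.mono (Set.Icc_subset_Icc le_rfl hx.2))
  rw [key, hg0, sub_zero]

lemma prim_zero {D : ℝ → ℝ} (hD : Continuous D)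
    (hzero : ∀ y ∈ Set.Icc (0:ℝ) 1, (∫ u in (0:ℝ)..y, D u) = 0)
    {x : ℝ} (hx : x ∈ Set.Icc (0:ℝ) 1) : D x = 0 := by
  have hF : HasDerivAt (fun y => ∫ u in (0:ℝ)..y, D u) (D x) x :=
    intervalIntegral.integral_hasDerivAt_right (hD.intervalIntegrable _ _)
      ⟨Set.univ, Filter.univ_mem, (hD.aestronglyMeasurable).restrict⟩
      hD.continuousAt
  have h1 : HasDerivWithinAt (fun _ : ℝ => (0:ℝ)) (D x) (Set.Icc 0 1) x :=
    (hF.hasDerivWithinAt).congr (fun y hy => (hzero y hy).symm) (hzero x hx).symm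
  have h2 : HasDerivWithinAt (fun _ : ℝ => (0:ℝ)) 0 (Set.Icc 0 1) x :=
    hasDerivWithinAt_const _ _ _
  have hu : UniqueDiffWithinAt ℝ (Set.Icc (0:ℝ) 1) x := (uniqueDiffOn_Icc one_pos) x hx
  rw [← h1.derivWithin hu, h2.derivWithin hu]

/-- Abel's integral equation: for `g ∈ C¹[0,1]` with `g(0) = 0`, the equation
`∫₀ˣ φ(t)(x−t)^{−1/2} dt = g(x)` has a unique continuous solution on `[0,1]`,
given by `φ(x) = (1/π)∫₀ˣ g′(t)(x−t)^{−1/2} dt`. -/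
theorem abel_integral_equation
    (g g' : ℝ → ℝ)
    (hg : ∀ x ∈ Set.Icc (0:ℝ) 1, HasDerivWithinAt g (g' x) (Set.Icc 0 1) x)
    (hg' : ContinuousOn g' (Set.Icc 0 1))
    (hg0 : g 0 = 0) :
    ∃ φ : ℝ → ℝ, ContinuousOn φ (Set.Icc 0 1) ∧
      (∀ x ∈ Set.Icc (0:ℝ) 1, ∫ t in (0:ℝ)..x, φ t * (x - t) ^ (-(1/2 : ℝ)) = g x) ∧
      (∀ x ∈ Set.Icc (0:ℝ) 1,
        φ x = (1 / π) * ∫ t in (0:ℝ)..x, g' t * (x - t) ^ (-(1/2 : ℝ))) ∧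
      ∀ ψ : ℝ → ℝ, ContinuousOn ψ (Set.Icc 0 1) →
        (∀ x ∈ Set.Icc (0:ℝ) 1, ∫ t in (0:ℝ)..x, ψ t * (x - t) ^ (-(1/2 : ℝ)) = g x) →
        ∀ x ∈ Set.Icc (0:ℝ) 1, ψ x = φ x := by
  obtain ⟨G, hGc, hGeq, M, hM⟩ := ext_of g' hg'
  -- the candidate solution
  set φ : ℝ → ℝ := fun x => (1/π) * ∫ t in (0:ℝ)..x, G t * (x - t) ^ (-(1/2:ℝ)) with hφ
  have hφcont : ContinuousOn φ (Set.Icc 0 1) :=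
    continuousOn_const.mul (conv_cont hGc hM)
  have hφsol : ∀ x ∈ Set.Icc (0:ℝ) 1,
      ∫ t in (0:ℝ)..x, φ t * (x - t) ^ (-(1/2 : ℝ)) = g x := by
    intro x hx
    have e1 : ∫ t in (0:ℝ)..x, φ t * (x - t) ^ (-(1/2 : ℝ))
        = (1/π) * ∫ t in (0:ℝ)..x,
            (∫ u in (0:ℝ)..t, G u * (t - u) ^ (-(1/2:ℝ))) * (x - t) ^ (-(1/2:ℝ)) := by
      rw [← intervalIntegral.integral_const_mul]
      refine intervalIntegral.integral_congr fun t ht => ?_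
      rw [hφ]
      ring
    rw [e1, fubini_key hGc hM hx.1]
    have e2 : ∫ u in (0:ℝ)..x, G u = ∫ u in (0:ℝ)..x, g' u := by
      refine intervalIntegral.integral_congr fun u hu => ?_
      rw [Set.uIcc_of_le hx.1] at hu
      exact hGeq u ⟨hu.1, le_trans hu.2 hx.2⟩
    rw [e2, ftc hg hg' hg0 hx]
    field_simp
  have hφform : ∀ x ∈ Set.Icc (0:ℝ) 1,
      φ x = (1 / π) * ∫ t in (0:ℝ)..x, g' t * (x - t) ^ (-(1/2 : ℝ)) := by
    intro x hx
    have e3 : ∫ t in (0:ℝ)..x, G t * (x - t) ^ (-(1/2:ℝ))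
        = ∫ t in (0:ℝ)..x, g' t * (x - t) ^ (-(1/2:ℝ)) := by
      refine intervalIntegral.integral_congr fun t ht => ?_
      rw [Set.uIcc_of_le hx.1] at ht
      rw [hGeq t ⟨ht.1, le_trans ht.2 hx.2⟩]
    rw [hφ, ← e3]
  refine ⟨φ, hφcont, hφsol, hφform, ?_⟩
  intro ψ hψc hψsol x hx
  obtain ⟨Ψ, hΨc, hΨeq, Mψ, hMψ⟩ := ext_of ψ hψc
  obtain ⟨Φ, hΦc, hΦeq, MΦ, hMΦ⟩ := ext_of φ hφcont
  -- primitives agree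
  have key : ∀ (h0 : ℝ → ℝ), Continuous h0 → ∀ (M0 : ℝ), (∀ u, |h0 u| ≤ M0) →
      ∀ (f0 : ℝ → ℝ),
      (∀ y ∈ Set.Icc (0:ℝ) 1, ∫ t in (0:ℝ)..y, f0 t * (y - t) ^ (-(1/2 : ℝ)) = g y) →
      (∀ u ∈ Set.Icc (0:ℝ) 1, h0 u = f0 u) →
      ∀ y ∈ Set.Icc (0:ℝ) 1,
      π * ∫ u in (0:ℝ)..y, h0 u = ∫ t in (0:ℝ)..y, g t * (y - t) ^ (-(1/2:ℝ)) := by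
    intro h0 hc0 M0 hM0 f0 hsol hagree y hy
    rw [← fubini_key hc0 hM0 hy.1]
    refine intervalIntegral.integral_congr fun t ht => ?_
    rw [Set.uIcc_of_le hy.1] at ht
    have ht1 : t ∈ Set.Icc (0:ℝ) 1 := ⟨ht.1, le_trans ht.2 hy.2⟩
    have inner : (∫ u in (0:ℝ)..t, h0 u * (t - u) ^ (-(1/2:ℝ))) = g t := by
      rw [← hsol t ht1]
      refine intervalIntegral.integral_congr fun u hu => ?_
      rw [Set.uIcc_of_le ht1.1] at hu
      rw [hagree u ⟨hu.1, le_trans hu.2 ht1.2⟩]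
    rw [inner]
  have keyψ := key Ψ hΨc Mψ hMψ ψ hψsol hΨeq
  have keyφ := key Φ hΦc MΦ hMΦ φ hφsol hΦeq
  have hzero : ∀ y ∈ Set.Icc (0:ℝ) 1, (∫ u in (0:ℝ)..y, (Ψ u - Φ u)) = 0 := by
    intro y hy
    rw [intervalIntegral.integral_sub (hΨc.intervalIntegrable _ _) (hΦc.intervalIntegrable _ _)]
    have h2 : (∫ u in (0:ℝ)..y, Ψ u) = ∫ u in (0:ℝ)..y, Φ u :=
      mul_left_cancel₀ Real.pi_ne_zero ((keyψ y hy).trans (keyφ y hy).symm)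
    rw [h2, sub_self]
  have := prim_zero ((hΨc.sub hΦc)) hzero hx
  have h1 : Ψ x = Φ x := by rw [Pi.sub_apply] at this; linarith [this]
  rw [← hΨeq x hx, ← hΦeq x hx, h1]
end

section
/- Suppose u ∈ C¹([0,1]²) solves the wave equation u_{ξη} = f₁ in characteristic coordinates with d'Alembert representation u(ξ,η) = (1/2)[τ(ξ) + τ(η) − ∫_ξ^η ν₁(t) dt] − ∫_ξ^η dξ₁ ∫_{ξ₁}^η f₁(ξ₁,η₁) dη₁, where ξ = x+y, η = x−y, τ(x) = u(x,0), ν₁(x) = u_y(x,0). If the directional condition (u_x − u_y) = 0 holds along the curve ξ = λ(η) (with λ smooth, 0 ≤ λ(η) ≤ η), then ν₁(η) = τ′(η) − 2∫_{λ(η)}^η f₁(ξ₁, η) dξ₁ for 0 ≤ η ≤ 1. -/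
open MeasureTheory Real intervalIntegral

open Set in

-- ordered triangle Fubini
theorem fubini_tri_le (f : ℝ → ℝ → ℝ) (hf : Continuous fun p : ℝ × ℝ => f p.1 p.2)
    {a b : ℝ} (hab : a ≤ b) :
    (∫ x in a..b, ∫ y in x..b, f x y) = ∫ y in a..b, ∫ x in a..y, f x y := by
  set g : ℝ × ℝ → ℝ := ({p : ℝ × ℝ | p.1 < p.2}).indicator (fun p => f p.1 p.2) with hg
  have hmeas : MeasurableSet {p : ℝ × ℝ | p.1 < p.2} :=
    measurableSet_lt measurable_fst measurable_snd
  have hint : Integrable (fun p : ℝ × ℝ => g (p.1, p.2))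
      ((volume.restrict (Ioc a b)).prod (volume.restrict (Ioc a b))) := by
    rw [Measure.prod_restrict]
    have h1 : IntegrableOn (fun p : ℝ × ℝ => f p.1 p.2) (Ioc a b ×ˢ Ioc a b) := by
      apply (hf.continuousOn.integrableOn_compact (isCompact_Icc.prod isCompact_Icc)).mono_set
      exact Set.prod_mono Ioc_subset_Icc_self Ioc_subset_Icc_self
    simpa [hg, IntegrableOn, Measure.volume_eq_prod] using h1.indicator hmeas
  have hswap := MeasureTheory.integral_integral_swap (f := fun x y : ℝ => g (x, y)) hint
  have hL : (∫ x in Ioc a b, ∫ y in Ioc a b, g (x, y)) = ∫ x in a..b, ∫ y in x..b, f x y := by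
    rw [intervalIntegral.integral_of_le hab]
    apply setIntegral_congr_fun measurableSet_Ioc
    intro x hx
    show (∫ y in Ioc a b, g (x, y)) = ∫ y in x..b, f x y
    have h1 : (fun y => g (x, y)) = (Ioi x).indicator (fun y => f x y) := by
      ext y; simp [hg, Set.indicator, Set.mem_Ioi]
    rw [h1, setIntegral_indicator measurableSet_Ioi]
    have h2 : Ioc a b ∩ Ioi x = Ioc x b := by
      rw [Set.Ioc_inter_Ioi, max_eq_right hx.1.le]
    rw [h2, intervalIntegral.integral_of_le hx.2]
  have hR : (∫ y in Ioc a b, ∫ x in Ioc a b, g (x, y)) = ∫ y in a..b, ∫ x in a..y, f x y := by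
    rw [intervalIntegral.integral_of_le hab]
    apply setIntegral_congr_fun measurableSet_Ioc
    intro y hy
    show (∫ x in Ioc a b, g (x, y)) = ∫ x in a..y, f x y
    have h1 : (fun x => g (x, y)) = (Iio y).indicator (fun x => f x y) := by
      ext x; simp [hg, Set.indicator, Set.mem_Iio]
    rw [h1, setIntegral_indicator measurableSet_Iio]
    have h2 : Ioc a b ∩ Iio y = Ioo a y := by
      ext x
      simp only [Set.mem_inter_iff, Set.mem_Ioc, Set.mem_Iio, Set.mem_Ioo]
      constructor
      · rintro ⟨⟨h3, _⟩, h5⟩; exact ⟨h3, h5⟩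
      · rintro ⟨h3, h4⟩; exact ⟨⟨h3, le_trans h4.le hy.2⟩, h4⟩
    rw [h2, ← integral_Ioc_eq_integral_Ioo, intervalIntegral.integral_of_le hy.1.le]
  rw [← hL, ← hR]; exact hswap

theorem fubini_tri (f : ℝ → ℝ → ℝ) (hf : Continuous fun p : ℝ × ℝ => f p.1 p.2)
    (a b : ℝ) :
    (∫ x in a..b, ∫ y in x..b, f x y) = ∫ y in a..b, ∫ x in a..y, f x y := by
  rcases le_total a b with hab | hba
  · exact fubini_tri_le f hf hab
  · have key := fubini_tri_le (fun x y => f y x) (by fun_prop) hba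
    calc (∫ x in a..b, ∫ y in x..b, f x y)
        = ∫ x in b..a, ∫ y in b..x, f x y := by
          rw [intervalIntegral.integral_symm b a]
          rw [← intervalIntegral.integral_neg]
          congr 1; ext x
          rw [intervalIntegral.integral_symm b x]; ring
      _ = ∫ y in b..a, ∫ x in y..a, f x y := key.symm
      _ = ∫ y in a..b, ∫ x in a..y, f x y := by
          rw [intervalIntegral.integral_symm b a, ← intervalIntegral.integral_neg]
          congr 1; ext y
          rw [intervalIntegral.integral_symm y a]; ring

/-- From the d'Alembert representation
`u(ξ,η) = ½[τ(ξ) + τ(η) − ∫_ξ^η ν₁] − ∫_ξ^η ∫_{ξ₁}^η f₁`, the directional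
condition `u_x − u_y = 0` along the curve `ξ = λ(η)` (equivalently `∂u/∂η = 0`
there, since `u_x − u_y = 2∂u/∂η` in characteristic coordinates) yields
`ν₁(η) = τ′(η) − 2∫_{λ(η)}^η f₁(ξ₁,η) dξ₁` for `0 ≤ η ≤ 1`. -/
theorem darboux_functional_relation
    (τ τ' ν₁ : ℝ → ℝ) (f₁ : ℝ → ℝ → ℝ) (lam : ℝ → ℝ)
    (hτ : ∀ x : ℝ, HasDerivAt τ (τ' x) x)
    (hν₁ : Continuous ν₁)
    (hf₁ : Continuous fun p : ℝ × ℝ => f₁ p.1 p.2)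
    (hlam : ∀ η ∈ Set.Icc (0:ℝ) 1, 0 ≤ lam η ∧ lam η ≤ η)
    (u : ℝ → ℝ → ℝ)
    (hu : ∀ ξ η : ℝ, u ξ η =
      (1 / 2) * (τ ξ + τ η - ∫ t in ξ..η, ν₁ t) -
        ∫ ξ₁ in ξ..η, ∫ η₁ in ξ₁..η, f₁ ξ₁ η₁)
    (hcond : ∀ η ∈ Set.Icc (0:ℝ) 1, HasDerivAt (fun s => u (lam η) s) 0 η) :
    ∀ η ∈ Set.Icc (0:ℝ) 1,
      ν₁ η = τ' η - 2 * ∫ ξ₁ in (lam η)..η, f₁ ξ₁ η := by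
  intro η hη
  set ξ : ℝ := lam η with hξ
  -- the function G y = ∫ x in ξ..y, f₁ x y is continuous
  have hG : Continuous fun y : ℝ => ∫ x in ξ..y, f₁ x y := by
    have := intervalIntegral.continuous_parametric_primitive_of_continuous
      (μ := volume) (f := fun (y x : ℝ) => f₁ x y) (a₀ := ξ)
      (by fun_prop)
    exact this.comp (continuous_id.prodMk continuous_id) |>.congr (fun y => rfl)
  -- rewrite u ξ s using triangle Fubini
  have hVeq : (fun s => u ξ s) = fun s =>
      (1 / 2) * (τ ξ + τ s - ∫ t in ξ..s, ν₁ t) -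
        ∫ y in ξ..s, ∫ x in ξ..y, f₁ x y := by
    funext s
    rw [hu ξ s, fubini_tri f₁ hf₁ ξ s]
  -- derivative of the right-hand side at η
  have hD1 : HasDerivAt (fun s => ∫ t in ξ..s, ν₁ t) (ν₁ η) η :=
    intervalIntegral.integral_hasDerivAt_right (hν₁.intervalIntegrable ξ η)
      (hν₁.stronglyMeasurableAtFilter volume (nhds η)) hν₁.continuousAt
  have hD2 : HasDerivAt (fun s => ∫ y in ξ..s, ∫ x in ξ..y, f₁ x y)
      (∫ x in ξ..η, f₁ x η) η :=
    intervalIntegral.integral_hasDerivAt_right (hG.intervalIntegrable ξ η)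
      (hG.stronglyMeasurableAtFilter volume (nhds η)) hG.continuousAt
  have hDV : HasDerivAt (fun s => u ξ s)
      ((1 / 2) * (τ' η - ν₁ η) - ∫ x in ξ..η, f₁ x η) η := by
    rw [hVeq]
    have h1 : HasDerivAt (fun s => τ ξ + τ s - ∫ t in ξ..s, ν₁ t) (τ' η - ν₁ η) η := by
      exact ((hτ η).const_add (τ ξ)).sub hD1
    exact (h1.const_mul (1 / 2)).sub hD2
  have h0 := hcond η hη
  have := hDV.unique h0
  have hle : (∫ x in ξ..η, f₁ x η) = ∫ ξ₁ in (lam η)..η, f₁ ξ₁ η := rfl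
  rw [← hle]
  linarith
end
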